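/- arXiv:2411.18488 — 2 statements merged into one kernel-verified Lean document; each statement's English description precedes it below -/
import Mathlib

section
/- Let a ≥ 5 and b > a, and let L be the line arrangement in the complex projective plane consisting of a distinct lines passing through a point p_1 and b distinct lines passing through a point p_2 ≠ p_1, where the line joining p_1 and p_2 belongs to both families (so L consists of k = a + b − 1 lines, t_2(L) = (a−1)(b−1), t_a(L) = t_b(L) = 1). Then the Levi graph G(L) contains no induced cycle of length 10. -/
open scoped LinearAlgebra.Projectivization
open Projectivization

/-- The complex projective plane. -/
abbrev ProjPoint := ℙ ℂ (Fin 3 → ℂ)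

/-- A subset of the projective plane is a (projective) line if it is the zero locus of a
nonzero linear form. -/
def IsProjLine (L : Set ProjPoint) : Prop :=
  ∃ f : (Fin 3 → ℂ) →ₗ[ℂ] ℂ, f ≠ 0 ∧ L = {p | p.submodule ≤ LinearMap.ker f}

/-- The line in the projective plane with equation `a*x + b*y + c*z = 0`. -/
def projLine (a b c : ℂ) : Set ProjPoint :=
  {p : ProjPoint | ∀ v ∈ p.submodule, a * v 0 + b * v 1 + c * v 2 = 0}

/-- An arrangement of `k` distinct lines in the complex projective plane. -/
structure LineArrangement (k : ℕ) where
  line : Fin k → Set ProjPoint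
  isLine : ∀ i, IsProjLine (line i)
  inj : Function.Injective line

namespace LineArrangement

variable {k : ℕ} (A : LineArrangement k)

/-- The multiplicity of a point: the number of lines of the arrangement passing through it. -/
noncomputable def mult (p : ProjPoint) : ℕ :=
  Set.ncard {i : Fin k | p ∈ A.line i}

/-- The singular points of the arrangement: points lying on at least two of the lines. -/
def sing : Set ProjPoint := {p | 2 ≤ A.mult p}

/-- `A.t r` is the number of points of multiplicity exactly `r`. -/
noncomputable def t (r : ℕ) : ℕ := Set.ncard {p | A.mult p = r}

/-- The Levi graph of a line arrangement: the bipartite graph on `Sing(L) ⊔ L` where a point is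
adjacent to a line iff the point lies on the line. -/
def levi : SimpleGraph (↥A.sing ⊕ Fin k) where
  Adj v w :=
    match v, w with
    | Sum.inl p, Sum.inr i => p.1 ∈ A.line i
    | Sum.inr i, Sum.inl p => p.1 ∈ A.line i
    | _, _ => False
  symm := by
    constructor
    rintro (p | i) (q | j) h <;> simp_all
  loopless := by
    constructor
    rintro (p | i) h <;> simp_all

end LineArrangement

/-- A simple graph has an induced cycle of length `n` if there is an induced subgraph
isomorphic to the cycle graph `C_n`, i.e. a graph embedding of `C_n`. -/
def HasInducedCycle {V : Type*} (G : SimpleGraph V) (n : ℕ) : Prop :=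
  Nonempty (SimpleGraph.cycleGraph n ↪g G)

/-! ### Auxiliary lemmas -/

/-- The kernel of a nonzero linear form on `ℂ³` has dimension 2. -/
lemma ker_finrank_aux {f : (Fin 3 → ℂ) →ₗ[ℂ] ℂ} (hf : f ≠ 0) :
    Module.finrank ℂ (LinearMap.ker f) = 2 := by
  have h := LinearMap.finrank_range_add_finrank_ker f
  have h3 : Module.finrank ℂ (Fin 3 → ℂ) = 3 := by simp
  have hr : Module.finrank ℂ (LinearMap.range f) = 1 := by
    have hle : Module.finrank ℂ (LinearMap.range f) ≤ 1 := by
      have := Submodule.finrank_le (LinearMap.range f)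
      simpa using this
    have hne : LinearMap.range f ≠ ⊥ := by
      simpa [LinearMap.range_eq_bot] using hf
    have hpos : Module.finrank ℂ (LinearMap.range f) ≠ 0 := by
      rw [Ne, Submodule.finrank_eq_zero]
      exact hne
    omega
  omega

/-- Two distinct projective lines intersect in at most one point. -/
lemma line_unique_inter {L M : Set ProjPoint} (hL : IsProjLine L) (hM : IsProjLine M)
    (hLM : L ≠ M) {q₁ q₂ : ProjPoint} (h1L : q₁ ∈ L) (h1M : q₁ ∈ M)
    (h2L : q₂ ∈ L) (h2M : q₂ ∈ M) : q₁ = q₂ := by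
  by_contra hq
  obtain ⟨f, hf0, rfl⟩ := hL
  obtain ⟨g, hg0, rfl⟩ := hM
  apply hLM
  suffices h : LinearMap.ker f = LinearMap.ker g by rw [h]
  have hst : q₁.submodule ≠ q₂.submodule := fun h => hq (submodule_injective h)
  have hs1 : Module.finrank ℂ q₁.submodule = 1 := finrank_submodule q₁
  have hs2 : Module.finrank ℂ q₂.submodule = 1 := finrank_submodule q₂
  have hinf : Module.finrank ℂ ↥(q₁.submodule ⊓ q₂.submodule) = 0 := by
    by_contra h0
    have hle : q₁.submodule ⊓ q₂.submodule ≤ q₁.submodule := inf_le_left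
    have hle2 := Submodule.finrank_mono hle
    have heq : q₁.submodule ⊓ q₂.submodule = q₁.submodule :=
      Submodule.eq_of_le_of_finrank_le hle (by omega)
    have hle3 : q₁.submodule ≤ q₂.submodule := heq ▸ inf_le_right
    exact hst (Submodule.eq_of_le_of_finrank_le hle3 (by omega))
  have hsup : Module.finrank ℂ ↥(q₁.submodule ⊔ q₂.submodule) = 2 := by
    have := Submodule.finrank_sup_add_finrank_inf_eq q₁.submodule q₂.submodule
    omega
  have hsub : q₁.submodule ⊔ q₂.submodule ≤ LinearMap.ker f ⊓ LinearMap.ker g :=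
    sup_le (le_inf h1L h1M) (le_inf h2L h2M)
  have hkf := ker_finrank_aux hf0
  have hkg := ker_finrank_aux hg0
  have h2le : 2 ≤ Module.finrank ℂ ↥(LinearMap.ker f ⊓ LinearMap.ker g) := by
    have := Submodule.finrank_mono hsub
    omega
  have heqf : LinearMap.ker f ⊓ LinearMap.ker g = LinearMap.ker f :=
    Submodule.eq_of_le_of_finrank_le inf_le_left (by omega)
  have heqg : LinearMap.ker f ⊓ LinearMap.ker g = LinearMap.ker g :=
    Submodule.eq_of_le_of_finrank_le inf_le_right (by omega)
  rw [← heqf, heqg]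

/-- Position of the `x`-th line vertex in the 10-cycle. -/
def evPos (x : Fin 5) : Fin 10 := ⟨2 * x.val, by omega⟩

/-- Position of the `x`-th point vertex in the 10-cycle. -/
def odPos (x : Fin 5) : Fin 10 := ⟨2 * x.val + 1, by omega⟩

/-- Combinatorial core: for any 2-coloring of 5 cyclically arranged lines, there are three
lines of the same color, two of which are consecutive, together with the relevant adjacency
facts in the 10-cycle. -/
lemma comb_aux (w : Fin 5 → Bool) : ∃ x z : Fin 5, w x = w (x + 1) ∧ w x = w z ∧
    z ≠ x ∧ z ≠ x + 1 ∧
    (SimpleGraph.cycleGraph 10).Adj (odPos x) (evPos x) ∧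
    (SimpleGraph.cycleGraph 10).Adj (odPos x) (evPos (x + 1)) ∧
    ¬ (SimpleGraph.cycleGraph 10).Adj (odPos x) (evPos z) ∧
    evPos x ≠ evPos (x + 1) ∧ evPos z ≠ evPos x ∧ evPos z ≠ evPos (x + 1) := by
  revert w; decide

/-- Rotation automorphism of the 10-cycle. -/
def rotAux : SimpleGraph.cycleGraph 10 ≃g SimpleGraph.cycleGraph 10 where
  toEquiv := Equiv.addRight (1 : Fin 10)
  map_rel_iff' := by
    intro u v
    simp [SimpleGraph.cycleGraph_adj, Equiv.addRight]

/-- Adjacent vertices in the Levi graph lie on opposite sides of the bipartition. -/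
lemma levi_side {k : ℕ} (A : LineArrangement k) {u v : ↥A.sing ⊕ Fin k}
    (h : A.levi.Adj u v) : u.isRight = !v.isRight := by
  rcases u with p | i <;> rcases v with q | j <;> simp_all [LineArrangement.levi]

/-- Main auxiliary lemma: if every line of the arrangement passes through `p₁` or `p₂`,
then there is no induced 10-cycle in the Levi graph (with line vertices at even positions). -/
lemma aux_no_cycle {k : ℕ} (A : LineArrangement k) (p₁ p₂ : ProjPoint)
    (hcov : ∀ i, p₁ ∈ A.line i ∨ p₂ ∈ A.line i)
    (e : SimpleGraph.cycleGraph 10 ↪g A.levi) (h0 : (e 0).isRight = true) : False := by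
  classical
  have step : ∀ i : Fin 10, ((e (i + 1)).isRight) = !((e i).isRight) := by
    intro i
    have hadj : (SimpleGraph.cycleGraph 10).Adj i (i + 1) := by
      rw [SimpleGraph.cycleGraph_adj']
      right
      rw [add_sub_cancel_left]
      rfl
    have hs := levi_side A (e.map_rel_iff.2 hadj)
    cases hb : (e (i + 1)).isRight <;> simp_all
  have v0 : (e (0 : Fin 10)).isRight = true := h0
  have v1 : (e (1 : Fin 10)).isRight = false := by have := step 0; rw [v0] at this; simpa using this
  have v2 : (e (2 : Fin 10)).isRight = true := by have := step 1; rw [v1] at this; simpa using this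
  have v3 : (e (3 : Fin 10)).isRight = false := by have := step 2; rw [v2] at this; simpa using this
  have v4 : (e (4 : Fin 10)).isRight = true := by have := step 3; rw [v3] at this; simpa using this
  have v5 : (e (5 : Fin 10)).isRight = false := by have := step 4; rw [v4] at this; simpa using this
  have v6 : (e (6 : Fin 10)).isRight = true := by have := step 5; rw [v5] at this; simpa using this
  have v7 : (e (7 : Fin 10)).isRight = false := by have := step 6; rw [v6] at this; simpa using this
  have v8 : (e (8 : Fin 10)).isRight = true := by have := step 7; rw [v7] at this; simpa using this
  have v9 : (e (9 : Fin 10)).isRight = false := by have := step 8; rw [v8] at this; simpa using this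
  have hev : ∀ j : Fin 5, ∃ li, e (evPos j) = Sum.inr li := by
    intro j
    fin_cases j
    · exact Sum.isRight_iff.mp v0
    · exact Sum.isRight_iff.mp v2
    · exact Sum.isRight_iff.mp v4
    · exact Sum.isRight_iff.mp v6
    · exact Sum.isRight_iff.mp v8
  have hodd : ∀ j : Fin 5, (e (odPos j)).isRight = false := by
    intro j
    fin_cases j
    · exact v1
    · exact v3
    · exact v5
    · exact v7
    · exact v9
  have hod : ∀ j : Fin 5, ∃ pj, e (odPos j) = Sum.inl pj := by
    intro j
    rcases h' : e (odPos j) with p | i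
    · exact ⟨p, rfl⟩
    · exfalso; have := hodd j; rw [h'] at this; simp at this
  choose l hl using hev
  choose pt hpt using hod
  have mem : ∀ x y : Fin 5, (SimpleGraph.cycleGraph 10).Adj (odPos x) (evPos y) →
      (pt x).1 ∈ A.line (l y) := by
    intro x y h
    have h2 := e.map_rel_iff.2 h
    rw [hpt x, hl y] at h2
    exact h2
  have notmem : ∀ x z : Fin 5, ¬ (SimpleGraph.cycleGraph 10).Adj (odPos x) (evPos z) →
      (pt x).1 ∉ A.line (l z) := by
    intro x z h hm
    apply h
    apply e.map_rel_iff.1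
    rw [hpt x, hl z]
    exact hm
  have ldist : ∀ {x y : Fin 5}, evPos x ≠ evPos y → l x ≠ l y := by
    intro x y hxy hl'
    apply hxy
    apply e.injective
    rw [hl x, hl y, hl']
  set w : Fin 5 → Bool := fun j => if p₁ ∈ A.line (l j) then true else false with hw
  have hwt : ∀ j, w j = true → p₁ ∈ A.line (l j) := by
    intro j h
    by_contra hc
    simp [hw, hc] at h
  have hwf : ∀ j, w j = false → p₂ ∈ A.line (l j) := by
    intro j h
    rcases hcov (l j) with h1 | h2
    · simp [hw, h1] at h
    · exact h2
  obtain ⟨x, z, hw1, hw2, _, _, hA1, hA2, hA3, hev1, hev2, hev3⟩ := comb_aux w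
  have key : ∃ P : ProjPoint, P ∈ A.line (l x) ∧ P ∈ A.line (l (x + 1)) ∧ P ∈ A.line (l z) := by
    cases hwx : w x with
    | true => exact ⟨p₁, hwt x hwx, hwt _ (by rw [← hw1, hwx]), hwt _ (by rw [← hw2, hwx])⟩
    | false => exact ⟨p₂, hwf x hwx, hwf _ (by rw [← hw1, hwx]), hwf _ (by rw [← hw2, hwx])⟩
  obtain ⟨P, hP1, hP2, hP3⟩ := key
  have hq1 := mem x x hA1
  have hq2 := mem x (x + 1) hA2
  have hPq : P = (pt x).1 :=
    line_unique_inter (A.isLine _) (A.isLine _) (fun h => ldist hev1 (A.inj h)) hP1 hP2 hq1 hq2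
  exact notmem x z hA3 (hPq ▸ hP3)

/-- A supersolvable arrangement with two modular points: `a ≥ 5` lines through
`p₁`, `b > a` lines through `p₂ ≠ p₁`, sharing the joining line, so `k = a + b - 1` lines.
Its Levi graph has no induced cycle of length `10`. -/
theorem two_modular_points_no_induced_ten (a b : ℕ) (ha : 5 ≤ a) (hb : a < b)
    (A : LineArrangement (a + b - 1)) (p₁ p₂ : ProjPoint) (hne : p₁ ≠ p₂)
    (h₁ : ∀ i : Fin (a + b - 1), (i : ℕ) < a → p₁ ∈ A.line i)
    (h₂ : ∀ i : Fin (a + b - 1), a - 1 ≤ (i : ℕ) → p₂ ∈ A.line i) :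
    ¬ HasInducedCycle A.levi 10 := by
  rintro ⟨e⟩
  have hcov : ∀ i, p₁ ∈ A.line i ∨ p₂ ∈ A.line i := by
    intro i
    rcases lt_or_ge (i : ℕ) a with h | h
    · exact Or.inl (h₁ i h)
    · exact Or.inr (h₂ i (by omega))
  cases h0 : (e 0).isRight with
  | true => exact aux_no_cycle A p₁ p₂ hcov e h0
  | false =>
    have hadj : (SimpleGraph.cycleGraph 10).Adj 0 1 := by decide
    have hs := levi_side A (e.map_rel_iff.2 hadj)
    have h1 : (e (1 : Fin 10)).isRight = true := by
      cases hb' : (e (1 : Fin 10)).isRight <;> simp_all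
    exact aux_no_cycle A p₁ p₂ hcov (e.comp rotAux.toEmbedding) h1
end

section
/- Let L = {ℓ_1,…,ℓ_k} be a line arrangement in the complex projective plane with k ≥ 10 lines, let q be the largest integer with t_q(L) ≠ 0, and suppose the lines ℓ_1,…,ℓ_q all pass through one common point. If k = 2q − 1 and t_{k−q}(L) = 0 (i.e. t_{q−1}(L) = 0), then the Levi graph G(L) contains an induced cycle of length 10 if and only if t_q(L) = 1. -/
open scoped LinearAlgebra.Projectivization
open Projectivization

lemma finrank_ker_two (f : (Fin 3 → ℂ) →ₗ[ℂ] ℂ) (hf : f ≠ 0) :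
    Module.finrank ℂ (LinearMap.ker f) = 2 := by
  have h := Module.Dual.finrank_ker_add_one_of_ne_zero (f := f) hf
  simp only [Module.finrank_fin_fun] at h
  omega

/-- Two projective lines intersect. -/
lemma lines_intersect {L1 L2 : Set ProjPoint} (h1 : IsProjLine L1) (h2 : IsProjLine L2) :
    ∃ p, p ∈ L1 ∧ p ∈ L2 := by
  obtain ⟨f, hf, rfl⟩ := h1
  obtain ⟨g, hg, rfl⟩ := h2
  have h1 : Module.finrank ℂ (LinearMap.ker f) = 2 := finrank_ker_two f hf
  have h2 : Module.finrank ℂ (LinearMap.ker g) = 2 := finrank_ker_two g hg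
  have hinf : 1 ≤ Module.finrank ℂ ↥(LinearMap.ker f ⊓ LinearMap.ker g) := by
    have hsum := Submodule.finrank_sup_add_finrank_inf_eq (LinearMap.ker f) (LinearMap.ker g)
    have hsup : Module.finrank ℂ ↥(LinearMap.ker f ⊔ LinearMap.ker g) ≤ 3 := by
      have := Submodule.finrank_le (LinearMap.ker f ⊔ LinearMap.ker g)
      simpa [Module.finrank_fin_fun] using this
    omega
  have hpos : 0 < Module.rank ℂ ↥(LinearMap.ker f ⊓ LinearMap.ker g) := by
    rw [← Module.finrank_eq_rank]; exact_mod_cast by omega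
  obtain ⟨v, hv, hv0⟩ := exists_mem_ne_zero_of_rank_pos hpos
  refine ⟨Projectivization.mk ℂ v hv0, ?_, ?_⟩ <;>
      simp only [Set.mem_setOf_eq, submodule_mk, Submodule.span_singleton_le_iff_mem]
  · exact (Submodule.mem_inf.mp hv).1
  · exact (Submodule.mem_inf.mp hv).2

/-- Two lines through two distinct points coincide. -/
lemma lines_unique {L1 L2 : Set ProjPoint} (h1 : IsProjLine L1) (h2 : IsProjLine L2)
    {p p' : ProjPoint} (hne : p ≠ p') (hp1 : p ∈ L1) (hp1' : p' ∈ L1)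
    (hp2 : p ∈ L2) (hp2' : p' ∈ L2) : L1 = L2 := by
  obtain ⟨f, hf, rfl⟩ := h1
  obtain ⟨g, hg, rfl⟩ := h2
  set W := p.submodule ⊔ p'.submodule with hW
  have hsm : p.submodule ≠ p'.submodule := fun h => hne (submodule_injective h)
  have hinf : Module.finrank ℂ ↥(p.submodule ⊓ p'.submodule) = 0 := by
    by_contra hpos
    have h1 : 1 ≤ Module.finrank ℂ ↥(p.submodule ⊓ p'.submodule) := by omega
    have e1 : p.submodule ⊓ p'.submodule = p.submodule :=
      Submodule.eq_of_le_of_finrank_le inf_le_left (by rw [finrank_submodule]; exact h1)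
    have e2 : p.submodule ⊓ p'.submodule = p'.submodule :=
      Submodule.eq_of_le_of_finrank_le inf_le_right (by rw [finrank_submodule]; exact h1)
    exact hsm (e1 ▸ e2)
  have hWrank : Module.finrank ℂ ↥W = 2 := by
    rw [hW]
    have := Submodule.finrank_sup_add_finrank_inf_eq p.submodule p'.submodule
    rw [hinf, finrank_submodule, finrank_submodule] at this
    omega
  have hker : ∀ (h : (Fin 3 → ℂ) →ₗ[ℂ] ℂ), h ≠ 0 → p.submodule ≤ LinearMap.ker h →
      p'.submodule ≤ LinearMap.ker h → LinearMap.ker h = W := by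
    intro h hh hph hph'
    have hle : W ≤ LinearMap.ker h := sup_le hph hph'
    exact (Submodule.eq_of_le_of_finrank_le hle (by rw [hWrank, finrank_ker_two h hh])).symm
  have e : LinearMap.ker f = LinearMap.ker g := by
    rw [hker f hf hp1 hp1', hker g hg hp2 hp2']
  ext x; simp [e]


namespace LineArrangement

variable {k : ℕ} {A : LineArrangement k}

/-- Abstract description of an induced 10-cycle in the Levi graph. -/
def Config (A : LineArrangement k) : Prop :=
  ∃ (P : Fin 5 → ProjPoint) (M : Fin 5 → Fin k),
    Function.Injective P ∧ Function.Injective M ∧ (∀ i, 2 ≤ A.mult (P i)) ∧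
    (∀ i j : Fin 5, P i ∈ A.line (M j) ↔ (j = i ∨ j = i + 1))

lemma levi_adj_inl_inr (p : ↥A.sing) (i : Fin k) :
    A.levi.Adj (Sum.inl p) (Sum.inr i) ↔ p.1 ∈ A.line i := Iff.rfl

lemma levi_adj_inr_inl (p : ↥A.sing) (i : Fin k) :
    A.levi.Adj (Sum.inr i) (Sum.inl p) ↔ p.1 ∈ A.line i := Iff.rfl

lemma levi_adj_inl_inl (p q : ↥A.sing) :
    ¬ A.levi.Adj (Sum.inl p) (Sum.inl q) := fun h => h

lemma levi_adj_inr_inr (i j : Fin k) :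
    ¬ A.levi.Adj (Sum.inr i) (Sum.inr j) := fun h => h

/-- vertex of the 10-cycle carrying point `j`. -/
def pvert (j : Fin 5) : Fin 10 := ⟨2 * j.val, by omega⟩

/-- vertex of the 10-cycle carrying line `j`. -/
def mvert (j : Fin 5) : Fin 10 := ⟨(2 * j.val + 9) % 10, Nat.mod_lt _ (by norm_num)⟩

lemma pm_adj : ∀ i j : Fin 5,
    (SimpleGraph.cycleGraph 10).Adj (pvert i) (mvert j) ↔ (j = i ∨ j = i + 1) := by decide

lemma pp_not_adj : ∀ i j : Fin 5, ¬ (SimpleGraph.cycleGraph 10).Adj (pvert i) (pvert j) := by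
  decide

lemma mm_not_adj : ∀ i j : Fin 5, ¬ (SimpleGraph.cycleGraph 10).Adj (mvert i) (mvert j) := by
  decide

lemma pvert_inj : ∀ i j : Fin 5, pvert i = pvert j → i = j := by decide

lemma mvert_inj : ∀ i j : Fin 5, mvert i = mvert j → i = j := by decide

lemma pvert_ne_mvert : ∀ i j : Fin 5, pvert i ≠ mvert j := by decide

lemma vert_cover : ∀ v : Fin 10, (∃ j, v = pvert j) ∨ (∃ j, v = mvert j) := by decide

/-- From a `Config`, build an induced 10-cycle in the Levi graph. -/
lemma hasInducedCycle_of_config (h : Config A) : HasInducedCycle A.levi 10 := by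
  obtain ⟨P, M, hPinj, hMinj, hsing, hinc⟩ := h
  -- the map on vertices
  set f : Fin 10 → (↥A.sing ⊕ Fin k) := fun v =>
    if h : v.val % 2 = 0 then Sum.inl ⟨P ⟨v.val / 2, by omega⟩, hsing _⟩
    else Sum.inr (M ⟨(v.val + 1) / 2 % 5, Nat.mod_lt _ (by norm_num)⟩) with hf
  have hfp : ∀ j : Fin 5, f (pvert j) = Sum.inl ⟨P j, hsing j⟩ := by
    intro j
    have hv : (pvert j).val = 2 * j.val := rfl
    have h2 : (pvert j).val % 2 = 0 := by omega
    simp only [hf, h2, dif_pos]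
    have hidx : (⟨(pvert j).val / 2, by omega⟩ : Fin 5) = j := by
      ext; simp only [hv]; omega
    rw [hidx]
  have hfm : ∀ j : Fin 5, f (mvert j) = Sum.inr (M j) := by
    intro j
    have hv : (mvert j).val = (2 * j.val + 9) % 10 := rfl
    have hj := j.isLt
    have h2 : ¬ (mvert j).val % 2 = 0 := by omega
    simp only [hf, dif_neg h2]
    have hidx : (⟨((mvert j).val + 1) / 2 % 5, Nat.mod_lt _ (by norm_num)⟩ : Fin 5) = j := by
      ext; simp only [hv]; omega
    rw [hidx]
  have hinj : Function.Injective f := by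
    intro u v huv
    rcases vert_cover u with ⟨i, rfl⟩ | ⟨i, rfl⟩ <;> rcases vert_cover v with ⟨j, rfl⟩ | ⟨j, rfl⟩
    · rw [hfp, hfp] at huv
      exact congrArg pvert (hPinj (congrArg Subtype.val (Sum.inl_injective huv)))
    · rw [hfp, hfm] at huv; simp at huv
    · rw [hfm, hfp] at huv; simp at huv
    · rw [hfm, hfm] at huv
      exact congrArg mvert (hMinj (by simpa using huv))
  refine ⟨⟨⟨f, hinj⟩, ?_⟩⟩
  intro u v
  show A.levi.Adj (f u) (f v) ↔ _
  rcases vert_cover u with ⟨i, rfl⟩ | ⟨i, rfl⟩ <;> rcases vert_cover v with ⟨j, rfl⟩ | ⟨j, rfl⟩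
  · rw [hfp, hfp]
    simp only [levi_adj_inl_inl, false_iff]
    exact pp_not_adj i j
  · rw [hfp, hfm, levi_adj_inl_inr, pm_adj, hinc]
  · rw [hfm, hfp, levi_adj_inr_inl, hinc]
    rw [(SimpleGraph.cycleGraph 10).adj_comm, pm_adj]
  · rw [hfm, hfm]
    simp only [levi_adj_inr_inr, false_iff]
    exact mm_not_adj i j

lemma cycle_adj_of (u v : Fin 10) (h : (SimpleGraph.cycleGraph 10).Adj u v)
    (e : SimpleGraph.cycleGraph 10 ↪g A.levi) :
    (e u).isLeft = !(e v).isLeft := by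
  have hadj : A.levi.Adj (e u) (e v) := e.map_rel_iff.mpr h
  rcases hu : e u with p | i <;> rcases hv : e v with q | j <;>
    rw [hu, hv] at hadj <;> simp_all
  · exact levi_adj_inl_inl p q hadj
  · exact levi_adj_inr_inr i j hadj

lemma config_of_embedding (e : SimpleGraph.cycleGraph 10 ↪g A.levi)
    (h0 : (e (pvert 0)).isLeft = true) : Config A := by
  -- all point-vertices are `inl`, all line-vertices are `inr`
  have flip : ∀ i j : Fin 5, (j = i ∨ j = i + 1) →
      (e (pvert i)).isLeft = !(e (mvert j)).isLeft := by
    intro i j hij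
    exact cycle_adj_of _ _ ((pm_adj i j).mpr hij) e
  have f00 := flip 0 0 (by decide)
  have f01 := flip 0 1 (by decide)
  have f11 := flip 1 1 (by decide)
  have f12 := flip 1 2 (by decide)
  have f22 := flip 2 2 (by decide)
  have f23 := flip 2 3 (by decide)
  have f33 := flip 3 3 (by decide)
  have f34 := flip 3 4 (by decide)
  have f44 := flip 4 4 (by decide)
  have f40 := flip 4 0 (by decide)
  have hpleft : ∀ i : Fin 5, (e (pvert i)).isLeft = true := by
    intro i
    fin_cases i
    · exact h0
    all_goals simp_all
  have hmright : ∀ j : Fin 5, (e (mvert j)).isLeft = false := by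
    intro j
    fin_cases j
    all_goals simp_all
  have hP : ∀ i : Fin 5, ∃ p : ↥A.sing, e (pvert i) = Sum.inl p := by
    intro i
    rcases hu : e (pvert i) with p | m
    · exact ⟨p, rfl⟩
    · have := hpleft i; rw [hu] at this; simp at this
  have hM : ∀ j : Fin 5, ∃ m : Fin k, e (mvert j) = Sum.inr m := by
    intro j
    rcases hu : e (mvert j) with p | m
    · have := hmright j; rw [hu] at this; simp at this
    · exact ⟨m, rfl⟩
  choose P hPe using hP
  choose M hMe using hM
  refine ⟨fun i => (P i).1, M, ?_, ?_, fun i => (P i).2, ?_⟩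
  · intro i j hij
    have : e (pvert i) = e (pvert j) := by rw [hPe, hPe, Subtype.ext hij]
    exact pvert_inj i j (e.injective this)
  · intro i j hij
    have : e (mvert i) = e (mvert j) := by rw [hMe, hMe, hij]
    exact mvert_inj i j (e.injective this)
  · intro i j
    have : ((P i : ProjPoint) ∈ A.line (M j)) ↔ A.levi.Adj (e (pvert i)) (e (mvert j)) := by
      rw [hPe, hMe, levi_adj_inl_inr]
    rw [this, e.map_rel_iff, pm_adj]

/-- the reflection-shift automorphism of the 10-cycle. -/
def autTen : SimpleGraph.cycleGraph 10 ↪g SimpleGraph.cycleGraph 10 where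
  toFun v := 1 - v
  inj' := fun a b h => sub_right_injective h
  map_rel_iff' := by decide

lemma config_of_cycle (h : HasInducedCycle A.levi 10) : Config A := by
  obtain ⟨e⟩ := h
  cases h0 : (e (pvert 0)).isLeft
  · -- e 0 is a line-vertex; compose with the reflection
    have hadj : (SimpleGraph.cycleGraph 10).Adj (pvert 0) (1 - pvert 0) := by decide
    have h1 : (e (1 - pvert 0)).isLeft = true := by
      have := cycle_adj_of _ _ hadj e
      rw [h0] at this
      simpa using this.symm
    refine config_of_embedding (e.comp autTen) ?_
    have : autTen (pvert 0) = 1 - pvert 0 := rfl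
    show (e (autTen (pvert 0))).isLeft = true
    rw [this]; exact h1
  · exact config_of_embedding e h0

end LineArrangement

namespace LineArrangement

variable {k : ℕ} {A : LineArrangement k}


/-- Two distinct points determine at most one line. -/
lemma point_unique {i j : Fin k} (hij : i ≠ j) {p p' : ProjPoint}
    (hpi : p ∈ A.line i) (hpj : p ∈ A.line j) (hpi' : p' ∈ A.line i) (hpj' : p' ∈ A.line j) :
    p = p' := by
  by_contra hne
  exact hij (A.inj (lines_unique (A.isLine i) (A.isLine j) hne hpi hpi' hpj hpj'))

lemma exists_meet (i j : Fin k) : ∃ p, p ∈ A.line i ∧ p ∈ A.line j :=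
  lines_intersect (A.isLine i) (A.isLine j)

lemma two_le_mult {p : ProjPoint} {i j : Fin k} (hij : i ≠ j)
    (hi : p ∈ A.line i) (hj : p ∈ A.line j) : 2 ≤ A.mult p := by
  have hsub : ({i, j} : Set (Fin k)) ⊆ {i : Fin k | p ∈ A.line i} := by
    rintro x (rfl | rfl) <;> simpa
  calc 2 = ({i, j} : Set (Fin k)).ncard := (Set.ncard_pair hij).symm
    _ ≤ _ := Set.ncard_le_ncard hsub (Set.toFinite _)

lemma exists_two_lines {p : ProjPoint} (hp : 2 ≤ A.mult p) :
    ∃ i j : Fin k, i ≠ j ∧ p ∈ A.line i ∧ p ∈ A.line j := by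
  obtain ⟨i, j, hi, hj, hij⟩ := (Set.one_lt_ncard_iff (Set.toFinite _)).mp
    (by exact lt_of_lt_of_le one_lt_two hp)
  exact ⟨i, j, hij, hi, hj⟩

/-- The set of singular points is finite. -/
lemma sing_finite : ({p | 2 ≤ A.mult p} : Set ProjPoint).Finite := by
  have hsub : {p | 2 ≤ A.mult p} ⊆
      ⋃ x : Fin k × Fin k, {p | x.1 ≠ x.2 ∧ p ∈ A.line x.1 ∧ p ∈ A.line x.2} := by
    intro p hp
    obtain ⟨i, j, hij, hi, hj⟩ := exists_two_lines hp
    exact Set.mem_iUnion.mpr ⟨(i, j), hij, hi, hj⟩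
  refine Set.Finite.subset (Set.finite_iUnion fun x => ?_) hsub
  rcases eq_or_ne x.1 x.2 with h | h
  · simp [h]
  · exact Set.Subsingleton.finite fun p hp p' hp' =>
      point_unique h hp.2.1 hp.2.2 hp'.2.1 hp'.2.2

lemma mult_finite (r : ℕ) (hr : 2 ≤ r) : ({p | A.mult p = r} : Set ProjPoint).Finite :=
  (sing_finite (A := A)).subset fun p hp => by
    simp only [Set.mem_setOf_eq] at hp ⊢; omega

lemma t_pos {r : ℕ} (hr : 2 ≤ r) {p : ProjPoint} (hp : A.mult p = r) : 1 ≤ A.t r := by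
  have := (Set.ncard_pos (mult_finite (A := A) r hr)).mpr ⟨p, hp⟩
  exact this

end LineArrangement

lemma ncard_le_one_of_subsingleton' {α : Type*} {s : Set α} (hs : s.Subsingleton) :
    s.ncard ≤ 1 := by
  rcases hs.eq_empty_or_singleton with rfl | ⟨a, rfl⟩ <;> simp

lemma fin_lt_ncard {k q : ℕ} (hqk : q ≤ k) : ({i : Fin k | (i : ℕ) < q}).ncard = q := by
  have h : {i : Fin k | (i : ℕ) < q} = (fun a : Fin q => Fin.castLE hqk a) '' Set.univ := by
    ext i
    simp only [Set.mem_setOf_eq, Set.image_univ, Set.mem_range]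
    constructor
    · intro h; exact ⟨⟨i.val, h⟩, by ext; rfl⟩
    · rintro ⟨a, rfl⟩; exact a.isLt.trans_le (le_refl q)
  rw [h, Set.ncard_image_of_injective _ (Fin.castLE_injective hqk)]
  simp [Set.ncard_univ]

namespace LineArrangement

variable {k q : ℕ} {A : LineArrangement k} {c : ProjPoint}

lemma common_lines_subsingleton {p p' : ProjPoint} (h : p ≠ p') :
    {i : Fin k | p ∈ A.line i ∧ p' ∈ A.line i}.Subsingleton := by
  intro i hi j hj
  by_contra hij
  exact h (point_unique hij hi.1 hj.1 hi.2 hj.2)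

/-- Under the main hypotheses: every point has multiplicity at most `q`. -/
lemma mult_le_q (hqmax : ∀ r : ℕ, q < r → A.t r = 0) {p : ProjPoint}
    (hp : 2 ≤ A.mult p) : A.mult p ≤ q := by
  by_contra h
  have h1 := t_pos hp (rfl : A.mult p = A.mult p)
  have h2 := hqmax (A.mult p) (by omega)
  omega

/-- Under the main hypotheses: the lines through `c` are exactly the first `q`. -/
lemma lines_through_c (hq2 : 2 ≤ q) (hqk : q ≤ k)
    (hqmax : ∀ r : ℕ, q < r → A.t r = 0) (hc : ∀ i : Fin k, (i : ℕ) < q → c ∈ A.line i) :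
    A.mult c = q ∧ ∀ j : Fin k, c ∈ A.line j ↔ (j : ℕ) < q := by
  have hsub : {i : Fin k | (i : ℕ) < q} ⊆ {i : Fin k | c ∈ A.line i} := fun i hi => hc i hi
  have hle : q ≤ A.mult c := by
    rw [← fin_lt_ncard hqk]
    exact Set.ncard_le_ncard hsub (Set.toFinite _)
  have hmc : A.mult c = q :=
    le_antisymm (mult_le_q hqmax (le_trans hq2 hle)) hle
  have heq : {i : Fin k | (i : ℕ) < q} = {i : Fin k | c ∈ A.line i} := by
    apply Set.eq_of_subset_of_ncard_le hsub _ (Set.toFinite _)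
    rw [fin_lt_ncard hqk]
    exact le_of_eq hmc
  refine ⟨hmc, fun j => ?_⟩
  constructor
  · intro hj
    have : j ∈ {i : Fin k | (i : ℕ) < q} := heq ▸ hj
    exact this
  · exact hc j


/-- Forward direction: an induced 10-cycle forces `t_q = 1`. -/
lemma t_eq_one_of_config (hq6 : 6 ≤ q) (hkq : k = 2 * q - 1)
    (hqmax : ∀ r : ℕ, q < r → A.t r = 0)
    (hmultc : A.mult c = q)
    (hcfg : Config A) : A.t q = 1 := by
  by_contra hne
  have ht1 : 1 ≤ A.t q := t_pos (by omega) hmultc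
  have ht2 : 1 < A.t q := by omega
  obtain ⟨a, ha, hac⟩ := Set.exists_ne_of_one_lt_ncard ht2 c
  have hmulta : A.mult a = q := ha
  -- every line passes through `a` or `c`
  have hS1 : ∀ i : Fin k, a ∈ A.line i ∨ c ∈ A.line i := by
    by_contra hco
    push_neg at hco
    obtain ⟨i0, hi0a, hi0c⟩ := hco
    set Sa := {i : Fin k | a ∈ A.line i} with hSa
    set Sc := {i : Fin k | c ∈ A.line i} with hSc
    have hinter : (Sa ∩ Sc).ncard ≤ 1 :=
      ncard_le_one_of_subsingleton' (fun i hi j hj =>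
        common_lines_subsingleton hac hi hj)
    have hsum := Set.ncard_union_add_ncard_inter Sa Sc (Set.toFinite _) (Set.toFinite _)
    have hSane : Sa.ncard = q := hmulta
    have hScne : Sc.ncard = q := hmultc
    have hsub : Sa ∪ Sc ⊆ Set.univ \ {i0} := by
      intro i hi
      refine ⟨trivial, ?_⟩
      rintro rfl
      rcases hi with hi | hi
      · exact hi0a hi
      · exact hi0c hi
    have hcard : (Set.univ \ ({i0} : Set (Fin k))).ncard = k - 1 := by
      rw [Set.ncard_diff (by simp) (Set.toFinite _)]
      simp [Set.ncard_univ]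
    have hle : (Sa ∪ Sc).ncard ≤ k - 1 := hcard ▸ Set.ncard_le_ncard hsub (Set.toFinite _)
    omega
  -- a point distinct from `x` lies on at most one line through `x`
  have hS2 : ∀ (x : ProjPoint) (p : ProjPoint), p ≠ x → ∀ i j : Fin k, i ≠ j →
      p ∈ A.line i → p ∈ A.line j → ¬(x ∈ A.line i ∧ x ∈ A.line j) := by
    rintro x p hpx i j hij hpi hpj ⟨hxi, hxj⟩
    exact hij (common_lines_subsingleton hpx ⟨hpi, hxi⟩ ⟨hpj, hxj⟩)
  obtain ⟨P, M, hPinj, hMinj, hsing, hinc⟩ := hcfg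
  have hMne : ∀ i : Fin 5, M i ≠ M (i + 1) := by
    intro i h
    exact (by decide : ∀ i : Fin 5, i ≠ i + 1) i (hMinj h)
  have hPi1 : ∀ i : Fin 5, P i ∈ A.line (M i) := fun i => (hinc i i).mpr (Or.inl rfl)
  have hPi2 : ∀ i : Fin 5, P i ∈ A.line (M (i + 1)) := fun i => (hinc i (i + 1)).mpr (Or.inr rfl)
  have notboth : ∀ (x : ProjPoint), ∀ i : Fin 5, P i ≠ x →
      ¬(x ∈ A.line (M i) ∧ x ∈ A.line (M (i + 1))) := fun x i hPx =>
    hS2 x (P i) hPx (M i) (M (i + 1)) (hMne i) (hPi1 i) (hPi2 i)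
  by_cases hEa : ∃ ia, P ia = a <;> by_cases hEc : ∃ ic, P ic = c
  · -- both `a` and `c` occur among the cycle points: impossible
    obtain ⟨ia, hia⟩ := hEa
    obtain ⟨ic, hic⟩ := hEc
    obtain ⟨j, hj1, hj2, hj3, hj4⟩ :=
      (by decide : ∀ x y : Fin 5, ∃ j : Fin 5, j ≠ x ∧ j ≠ x + 1 ∧ j ≠ y ∧ j ≠ y + 1) ia ic
    rcases hS1 (M j) with h | h
    · rw [← hia] at h
      rcases (hinc ia j).mp h with h' | h' <;> simp_all
    · rw [← hic] at h
      rcases (hinc ic j).mp h with h' | h' <;> simp_all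
  · -- only `a` occurs
    obtain ⟨ia, hia⟩ := hEa
    push_neg at hEc
    have hcl : ∀ j : Fin 5, j ≠ ia → j ≠ ia + 1 → c ∈ A.line (M j) := by
      intro j h1 h2
      rcases hS1 (M j) with h | h
      · rw [← hia] at h
        rcases (hinc ia j).mp h with h' | h' <;> simp_all
      · exact h
    have hd : ∀ x : Fin 5, x + 2 ≠ x ∧ x + 2 ≠ x + 1 ∧ x + 3 ≠ x ∧ x + 3 ≠ x + 1 ∧
        x + 2 + 1 = x + 3 := by decide
    obtain ⟨e1, e2, e3, e4, e5⟩ := hd ia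
    exact notboth c (ia + 2) (hEc _) ⟨hcl _ e1 e2, e5 ▸ hcl _ e3 e4⟩
  · -- only `c` occurs
    obtain ⟨ic, hic⟩ := hEc
    push_neg at hEa
    have hal : ∀ j : Fin 5, j ≠ ic → j ≠ ic + 1 → a ∈ A.line (M j) := by
      intro j h1 h2
      rcases hS1 (M j) with h | h
      · exact h
      · rw [← hic] at h
        rcases (hinc ic j).mp h with h' | h' <;> simp_all
    have hd : ∀ x : Fin 5, x + 2 ≠ x ∧ x + 2 ≠ x + 1 ∧ x + 3 ≠ x ∧ x + 3 ≠ x + 1 ∧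
        x + 2 + 1 = x + 3 := by decide
    obtain ⟨e1, e2, e3, e4, e5⟩ := hd ic
    exact notboth a (ic + 2) (hEa _) ⟨hal _ e1 e2, e5 ▸ hal _ e3 e4⟩
  · -- neither occurs: parity contradiction around the 5 lines
    push_neg at hEa
    push_neg at hEc
    have hstep : ∀ i : Fin 5, (a ∈ A.line (M (i + 1)) ↔ ¬ a ∈ A.line (M i)) := by
      intro i
      have h1 := notboth a i (hEa i)
      have h2 := notboth c i (hEc i)
      have h3 := hS1 (M i)
      have h4 := hS1 (M (i + 1))
      tauto
    have e0 := hstep 0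
    have e1 := hstep 1
    have e2 := hstep 2
    have e3 := hstep 3
    have e4 := hstep 4
    rw [(by decide : (0 : Fin 5) + 1 = 1)] at e0
    rw [(by decide : (1 : Fin 5) + 1 = 2)] at e1
    rw [(by decide : (2 : Fin 5) + 1 = 3)] at e2
    rw [(by decide : (3 : Fin 5) + 1 = 4)] at e3
    rw [(by decide : (4 : Fin 5) + 1 = 0)] at e4
    tauto


/-- Backward direction: if `t_q = 1`, build an induced 10-cycle configuration. -/
lemma config_of_t_eq_one (hq6 : 6 ≤ q) (hkq : k = 2 * q - 1)
    (hqmax : ∀ r : ℕ, q < r → A.t r = 0)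
    (hmultc : A.mult c = q) (hlc : ∀ j : Fin k, c ∈ A.line j ↔ (j : ℕ) < q)
    (h0 : A.t (q - 1) = 0) (ht1 : A.t q = 1) : Config A := by
  have hqk : q ≤ k := by omega
  -- the lines not through c are not all concurrent
  have hnc : ¬ ∃ y : ProjPoint, ∀ j : Fin k, q ≤ (j : ℕ) → y ∈ A.line j := by
    rintro ⟨y, hy⟩
    have hsub : {i : Fin k | q ≤ (i : ℕ)} ⊆ {i : Fin k | y ∈ A.line i} := fun i hi => hy i hi
    have hcompl : {i : Fin k | q ≤ (i : ℕ)} = {i : Fin k | (i : ℕ) < q}ᶜ := by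
      ext i; simp [not_lt]
    have hcn : ({i : Fin k | q ≤ (i : ℕ)}).ncard = k - q := by
      have h2 := Set.ncard_add_ncard_compl {i : Fin k | (i : ℕ) < q} (Set.toFinite _)
        (Set.toFinite _)
      rw [fin_lt_ncard hqk] at h2
      have h3 : Nat.card (Fin k) = k := by simp
      rw [hcompl]
      omega
    have hmy : k - q ≤ A.mult y := hcn ▸ Set.ncard_le_ncard hsub (Set.toFinite _)
    have hy2 : 2 ≤ A.mult y := by omega
    have hyq : A.mult y ≤ q := mult_le_q hqmax hy2
    -- y is not c
    have hyc : y ≠ c := by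
      intro h
      have hj : ((⟨q, by omega⟩ : Fin k) : ℕ) < q := (hlc ⟨q, by omega⟩).mp (h ▸ hy _ (le_refl q))
      simp at hj
    rcases (by omega : A.mult y = q - 1 ∨ A.mult y = q) with h | h
    · have := t_pos (by omega) h
      omega
    · have h2 : 1 < A.t q := (Set.one_lt_ncard_iff (mult_finite q (by omega))).mpr
        ⟨y, c, h, hmultc, hyc⟩
      omega
  push_neg at hnc
  -- choose three non-concurrent lines not through c
  set j0 : Fin k := ⟨q, by omega⟩ with hj0
  set j1 : Fin k := ⟨q + 1, by omega⟩ with hj1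
  have hj01 : j0 ≠ j1 := by simp [hj0, hj1, Fin.ext_iff]
  obtain ⟨x01, hx01j0, hx01j1⟩ := exists_meet (A := A) j0 j1
  obtain ⟨j2, hj2q, hx01j2⟩ := hnc x01
  have hj20 : j2 ≠ j0 := fun h => hx01j2 (h ▸ hx01j0)
  have hj21 : j2 ≠ j1 := fun h => hx01j2 (h ▸ hx01j1)
  obtain ⟨x02, hx02j0, hx02j2⟩ := exists_meet (A := A) j0 j2
  obtain ⟨x12, hx12j1, hx12j2⟩ := exists_meet (A := A) j1 j2
  -- c is not on these lines
  have hcj0 : c ∉ A.line j0 := fun h => by have := (hlc j0).mp h; simp [hj0] at this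
  have hcj1 : c ∉ A.line j1 := fun h => by have := (hlc j1).mp h; simp [hj1] at this
  have hcj2 : c ∉ A.line j2 := fun h => by have := (hlc j2).mp h; omega
  have hx01c : x01 ≠ c := fun h => hcj0 (h ▸ hx01j0)
  have hx02c : x02 ≠ c := fun h => hcj0 (h ▸ hx02j0)
  have hx12c : x12 ≠ c := fun h => hcj2 (h ▸ hx12j2)
  -- at most one pencil line through a point other than c
  have pencil_sub : ∀ x : ProjPoint, x ≠ c →
      {i : Fin k | (i : ℕ) < q ∧ x ∈ A.line i}.Subsingleton := by
    intro x hx i hi j hj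
    by_contra hij
    exact hx (point_unique hij hi.2 hj.2 ((hlc i).mpr hi.1) ((hlc j).mpr hj.1))
  -- choose two pencil lines avoiding the three meet points
  set B := {i : Fin k | (i : ℕ) < q ∧
      (x01 ∈ A.line i ∨ x02 ∈ A.line i ∨ x12 ∈ A.line i)} with hB
  have hBcard : B.ncard ≤ 3 := by
    have hsub : B ⊆ {i : Fin k | (i : ℕ) < q ∧ x01 ∈ A.line i} ∪
        ({i : Fin k | (i : ℕ) < q ∧ x02 ∈ A.line i} ∪
          {i : Fin k | (i : ℕ) < q ∧ x12 ∈ A.line i}) := by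
      rintro i ⟨h1, h2 | h2 | h2⟩
      · exact Or.inl ⟨h1, h2⟩
      · exact Or.inr (Or.inl ⟨h1, h2⟩)
      · exact Or.inr (Or.inr ⟨h1, h2⟩)
    have c1 := ncard_le_one_of_subsingleton' (pencil_sub x01 hx01c)
    have c2 := ncard_le_one_of_subsingleton' (pencil_sub x02 hx02c)
    have c3 := ncard_le_one_of_subsingleton' (pencil_sub x12 hx12c)
    have h4 := Set.ncard_le_ncard hsub (Set.toFinite _)
    have h5 := Set.ncard_union_le {i : Fin k | (i : ℕ) < q ∧ x01 ∈ A.line i}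
      ({i : Fin k | (i : ℕ) < q ∧ x02 ∈ A.line i} ∪ {i : Fin k | (i : ℕ) < q ∧ x12 ∈ A.line i})
    have h6 := Set.ncard_union_le {i : Fin k | (i : ℕ) < q ∧ x02 ∈ A.line i}
      {i : Fin k | (i : ℕ) < q ∧ x12 ∈ A.line i}
    omega
  have hGood : 1 < ({i : Fin k | (i : ℕ) < q} \ B).ncard := by
    have hBsub : B ⊆ {i : Fin k | (i : ℕ) < q} := fun i hi => hi.1
    rw [Set.ncard_diff hBsub (Set.toFinite _), fin_lt_ncard hqk]
    omega
  obtain ⟨i1, i2, hi1G, hi2G, hi12⟩ := (Set.one_lt_ncard_iff (Set.toFinite _)).mp hGood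
  have hi1q : (i1 : ℕ) < q := hi1G.1
  have hi2q : (i2 : ℕ) < q := hi2G.1
  have hi1B : ¬(x01 ∈ A.line i1 ∨ x02 ∈ A.line i1 ∨ x12 ∈ A.line i1) :=
    fun h => hi1G.2 ⟨hi1q, h⟩
  have hi2B : ¬(x01 ∈ A.line i2 ∨ x02 ∈ A.line i2 ∨ x12 ∈ A.line i2) :=
    fun h => hi2G.2 ⟨hi2q, h⟩
  push_neg at hi1B hi2B
  obtain ⟨hx01i1, hx02i1, hx12i1⟩ := hi1B
  obtain ⟨hx01i2, hx02i2, hx12i2⟩ := hi2B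
  have hci1 : c ∈ A.line i1 := (hlc i1).mpr hi1q
  have hci2 : c ∈ A.line i2 := (hlc i2).mpr hi2q
  obtain ⟨a1, ha1i1, ha1j0⟩ := exists_meet (A := A) i1 j0
  obtain ⟨b3, hb3j1, hb3i2⟩ := exists_meet (A := A) j1 i2
  -- index distinctness
  have hi1j0 : i1 ≠ j0 := fun h => by rw [h, hj0] at hi1q; simp at hi1q
  have hi1j1 : i1 ≠ j1 := fun h => by rw [h, hj1] at hi1q; simp at hi1q
  have hi1j2 : i1 ≠ j2 := fun h => by rw [h] at hi1q; omega
  have hi2j0 : i2 ≠ j0 := fun h => by rw [h, hj0] at hi2q; simp at hi2q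
  have hi2j1 : i2 ≠ j1 := fun h => by rw [h, hj1] at hi2q; simp at hi2q
  have hi2j2 : i2 ≠ j2 := fun h => by rw [h] at hi2q; omega
  -- derived non-incidences
  have hna1j1 : a1 ∉ A.line j1 := fun h =>
    hx01i1 ((point_unique hj01 ha1j0 h hx01j0 hx01j1) ▸ ha1i1)
  have hna1j2 : a1 ∉ A.line j2 := fun h =>
    hx02i1 ((point_unique hj20.symm ha1j0 h hx02j0 hx02j2) ▸ ha1i1)
  have hna1i2 : a1 ∉ A.line i2 := fun h =>
    hcj0 ((point_unique hi12 ha1i1 h hci1 hci2) ▸ ha1j0)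
  have hnx02j1 : x02 ∉ A.line j1 := fun h =>
    hx01j2 ((point_unique hj01 hx02j0 h hx01j0 hx01j1) ▸ hx02j2)
  have hnx12j0 : x12 ∉ A.line j0 := fun h =>
    hx01j2 ((point_unique hj01 h hx12j1 hx01j0 hx01j1) ▸ hx12j2)
  have hnb3i1 : b3 ∉ A.line i1 := fun h =>
    hcj1 ((point_unique hi12 h hb3i2 hci1 hci2) ▸ hb3j1)
  have hnb3j0 : b3 ∉ A.line j0 := fun h =>
    hx01i2 ((point_unique hj01 h hb3j1 hx01j0 hx01j1) ▸ hb3i2)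
  have hnb3j2 : b3 ∉ A.line j2 := fun h =>
    hx12i2 ((point_unique hj21.symm hb3j1 h hx12j1 hx12j2) ▸ hb3i2)
  -- point distinctness
  have d01 : a1 ≠ x02 := fun h => hx02i1 (h ▸ ha1i1)
  have d02 : a1 ≠ x12 := fun h => hx12i1 (h ▸ ha1i1)
  have d03 : a1 ≠ b3 := fun h => hnb3j0 (h ▸ ha1j0)
  have d04 : a1 ≠ c := fun h => hcj0 (h ▸ ha1j0)
  have d12 : x02 ≠ x12 := fun h => hnx12j0 (h ▸ hx02j0)
  have d13 : x02 ≠ b3 := fun h => hnb3j0 (h ▸ hx02j0)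
  have d14 : x02 ≠ c := fun h => hcj0 (h ▸ hx02j0)
  have d23 : x12 ≠ b3 := fun h => hnb3j2 (h ▸ hx12j2)
  have d24 : x12 ≠ c := fun h => hcj2 (h ▸ hx12j2)
  have d34 : b3 ≠ c := fun h => hcj1 (h ▸ hb3j1)
  refine ⟨![a1, x02, x12, b3, c], ![i1, j0, j2, j1, i2], ?_, ?_, ?_, ?_⟩
  · intro x y hxy
    by_contra hne
    fin_cases x <;> fin_cases y
    exacts [hne rfl, d01 hxy, d02 hxy, d03 hxy, d04 hxy,
      d01 hxy.symm, hne rfl, d12 hxy, d13 hxy, d14 hxy,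
      d02 hxy.symm, d12 hxy.symm, hne rfl, d23 hxy, d24 hxy,
      d03 hxy.symm, d13 hxy.symm, d23 hxy.symm, hne rfl, d34 hxy,
      d04 hxy.symm, d14 hxy.symm, d24 hxy.symm, d34 hxy.symm, hne rfl]
  · intro x y hxy
    by_contra hne
    fin_cases x <;> fin_cases y
    exacts [hne rfl, hi1j0 hxy, hi1j2 hxy, hi1j1 hxy, hi12 hxy,
      hi1j0 (Eq.symm hxy), hne rfl, hj20 hxy.symm, hj01 hxy, hi2j0 hxy.symm,
      hi1j2 hxy.symm, hj20 hxy, hne rfl, hj21 hxy, hi2j2 hxy.symm,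
      hi1j1 hxy.symm, hj01 hxy.symm, hj21 hxy.symm, hne rfl, hi2j1 hxy.symm,
      hi12 hxy.symm, hi2j0 hxy, hi2j2 hxy, hi2j1 hxy, hne rfl]
  · intro x
    fin_cases x
    · exact two_le_mult hi1j0 ha1i1 ha1j0
    · exact two_le_mult hj20.symm hx02j0 hx02j2
    · exact two_le_mult hj21.symm hx12j1 hx12j2
    · exact two_le_mult hi2j1.symm hb3j1 hb3i2
    · exact two_le_mult hi12 hci1 hci2
  · intro x y
    fin_cases x <;> fin_cases y
    exacts [iff_of_true ha1i1 (by decide), iff_of_true ha1j0 (by decide),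
      iff_of_false hna1j2 (by decide), iff_of_false hna1j1 (by decide),
      iff_of_false hna1i2 (by decide),
      iff_of_false hx02i1 (by decide), iff_of_true hx02j0 (by decide),
      iff_of_true hx02j2 (by decide), iff_of_false hnx02j1 (by decide),
      iff_of_false hx02i2 (by decide),
      iff_of_false hx12i1 (by decide), iff_of_false hnx12j0 (by decide),
      iff_of_true hx12j2 (by decide), iff_of_true hx12j1 (by decide),
      iff_of_false hx12i2 (by decide),
      iff_of_false hnb3i1 (by decide), iff_of_false hnb3j0 (by decide),
      iff_of_false hnb3j2 (by decide), iff_of_true hb3j1 (by decide),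
      iff_of_true hb3i2 (by decide),
      iff_of_true hci1 (by decide), iff_of_false hcj0 (by decide),
      iff_of_false hcj2 (by decide), iff_of_false hcj1 (by decide),
      iff_of_true hci2 (by decide)]

end LineArrangement

/-- `k ≥ 10` lines, `q` maximal with `t_q ≠ 0`, lines `ℓ_0, …, ℓ_{q-1}` through a
common point, `k = 2q - 1` and `t_{k-q} = 0`. Then the Levi graph has an induced cycle of
length `10` iff `t_q = 1`. -/
theorem inducedCycle_ten_iff_tq_eq_one_of_k_eq (k q : ℕ) (hk : 10 ≤ k)
    (A : LineArrangement k)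
    (htq : A.t q ≠ 0) (hqmax : ∀ r : ℕ, q < r → A.t r = 0)
    (c : ProjPoint) (hc : ∀ i : Fin k, (i : ℕ) < q → c ∈ A.line i)
    (hkq : k = 2 * q - 1) (h0 : A.t (k - q) = 0) :
    HasInducedCycle A.levi 10 ↔ A.t q = 1 := by

  have hq6 : 6 ≤ q := by omega
  have hqk : q ≤ k := by omega
  obtain ⟨hmultc, hlc⟩ := LineArrangement.lines_through_c (by omega) hqk hqmax hc
  constructor
  · intro h
    exact LineArrangement.t_eq_one_of_config hq6 hkq hqmax hmultc
      (LineArrangement.config_of_cycle h)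
  · intro h
    have h0' : A.t (q - 1) = 0 := by rwa [show k - q = q - 1 by omega] at h0
    exact LineArrangement.hasInducedCycle_of_config
      (LineArrangement.config_of_t_eq_one hq6 hkq hqmax hmultc hlc h0' h)
end
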